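/- Let B be a string with period p where p ≤ |Q| ≤ |B|. Then every occurrence of Q in B is of the form y + j·p for some occurrence position y ≤ 2|Q| - 1 of Q in B and some j ≥ 0. Equivalently: if Q occurs in B at position z > 2|Q| - 1, then Q also occurs at position z - p. -/
import Mathlib

def HasPeriod {α : Type*} (S : List α) (p : ℕ) : Prop :=
  ∀ i : ℕ, 1 ≤ i → i + p ≤ S.length → S[i - 1]? = S[i + p - 1]?

def Occurs {α : Type*} (Q B : List α) (i : ℕ) : Prop :=
  1 ≤ i ∧ i + Q.length - 1 ≤ B.length ∧ (B.drop (i - 1)).take Q.length = Q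

/-- late occurrences can be shifted back by the period. -/
theorem late_occurrence_shifts_back {α : Type*} (B Q : List α) (p z : ℕ)
    (hper : HasPeriod B p) (hpQ : p ≤ Q.length) (hQB : Q.length ≤ B.length)
    (hz : Occurs Q B z) (hlate : z > 2 * Q.length - 1) :
    Occurs Q B (z - p) := by
  obtain ⟨hz1, hz2, hz3⟩ := hz
  rcases Nat.eq_zero_or_pos p with hp0 | hp
  · simpa [hp0] using ⟨hz1, hz2, hz3⟩
  have hQpos : 1 ≤ Q.length := le_trans hp hpQ
  have hzbig : z ≥ p + 1 := by omega
  have hB : ∀ k, k < Q.length → B[z - 1 + k]? = Q[k]? := by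
    intro k hk
    have := congrArg (fun l => l[k]?) hz3
    simpa [List.getElem?_take, List.getElem?_drop, hk] using this
  refine ⟨by omega, by omega, ?_⟩
  apply List.ext_getElem?
  intro k
  rcases lt_or_ge k Q.length with hk | hk
  · rw [List.getElem?_take, if_pos hk, List.getElem?_drop]
    have hper' := hper (z - p + k) (by omega) (by omega)
    have h1 : z - p - 1 + k = z - p + k - 1 := by omega
    have h2 : z - p + k + p - 1 = z - 1 + k := by omega
    rw [h1, hper', h2, hB k hk]
  · rw [List.getElem?_take, if_neg (by omega), List.getElem?_eq_none (by omega : Q.length ≤ k)]
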